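/- Let Γ be a connected finite simple graph. Then the restriction map r : Hom(A(Γ),ℝ) → Hom(BB(Γ),ℝ), sending a character of A(Γ) to its restriction to the subgroup BB(Γ), is a surjective ℝ-linear map, and its kernel consists precisely of those characters χ̂ : A(Γ) → ℝ that are constant on the vertex generators, i.e., for which there exists c ∈ ℝ with χ̂(v) = c for every vertex v of Γ. -/

import Mathlib

def raagRels {V : Type} (G : SimpleGraph V) : Set (FreeGroup V) :=
  {r | ∃ v w : V, G.Adj v w ∧
    r = FreeGroup.of v * FreeGroup.of w * (FreeGroup.of v)⁻¹ * (FreeGroup.of w)⁻¹}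

/-- The right-angled Artin group of a simple graph. -/
abbrev RAAG {V : Type} (G : SimpleGraph V) : Type := PresentedGroup (raagRels G)

/-- The canonical generator of `RAAG G` corresponding to a vertex. -/
def raagGen {V : Type} (G : SimpleGraph V) (v : V) : RAAG G :=
  PresentedGroup.of (rels := raagRels G) v

/-- The homomorphism `A(Γ) → ℤ` sending every vertex generator to `1`. -/
def bbgChar {V : Type} (G : SimpleGraph V) : RAAG G →* Multiplicative ℤ :=
  PresentedGroup.toGroup (f := fun _ : V => Multiplicative.ofAdd (1 : ℤ)) (by
    rintro r ⟨v, w, -, rfl⟩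
    simp only [map_mul, map_inv, FreeGroup.lift_apply_of]
    group)

/-- The Bestvina–Brady group of a simple graph, as a subgroup of the RAAG. -/
def BBG {V : Type} (G : SimpleGraph V) : Subgroup (RAAG G) := (bbgChar G).ker

/-- Restriction of a character of the RAAG to the Bestvina–Brady subgroup. -/
def restrictChar {V : Type} (G : SimpleGraph V) (χ : RAAG G →* Multiplicative ℝ) :
    ↥(BBG G) →* Multiplicative ℝ :=
  χ.comp (BBG G).subtype

/-- Scalar multiplication of an ℝ-valued character by a real number. -/
noncomputable def smulChar {H : Type} [Group H] (c : ℝ) (χ : H →* Multiplicative ℝ) :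
    H →* Multiplicative ℝ :=
  (AddMonoidHom.toMultiplicative (AddMonoidHom.mulLeft c)).comp χ

-- commuting generators
lemma raag_commute {V : Type} (G : SimpleGraph V) {v w : V} (h : G.Adj v w) :
    Commute (raagGen G v) (raagGen G w) := by
  rw [← commutatorElement_eq_one_iff_commute]
  have h1 : PresentedGroup.mk (raagRels G)
      (FreeGroup.of v * FreeGroup.of w * (FreeGroup.of v)⁻¹ * (FreeGroup.of w)⁻¹) = 1 := by
    apply (QuotientGroup.eq_one_iff _).mpr
    exact Subgroup.subset_normalClosure ⟨v, w, h, rfl⟩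
  simpa [raagGen, PresentedGroup.of, map_mul, map_inv, commutatorElement_def] using h1

lemma bbgChar_gen {V : Type} (G : SimpleGraph V) (v : V) :
    bbgChar G (raagGen G v) = Multiplicative.ofAdd (1 : ℤ) :=
  PresentedGroup.toGroup.of _

def raagS {V : Type} (G : SimpleGraph V) : Set (RAAG G) :=
  {x | ∃ v w : V, G.Adj v w ∧ x = raagGen G v * (raagGen G w)⁻¹}

lemma pair_mem_walk {V : Type} (G : SimpleGraph V) {v w : V} (p : G.Walk v w) :
    raagGen G v * (raagGen G w)⁻¹ ∈ Subgroup.closure (raagS G) := by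
  induction p with
  | nil => simpa using one_mem _
  | @cons v u w h p ih =>
    have : raagGen G v * (raagGen G w)⁻¹ =
        (raagGen G v * (raagGen G u)⁻¹) * (raagGen G u * (raagGen G w)⁻¹) := by group
    rw [this]
    exact mul_mem (Subgroup.subset_closure ⟨v, u, h, rfl⟩) ih

lemma pair_mem_walk' {V : Type} (G : SimpleGraph V) {v w : V} (p : G.Walk v w) :
    (raagGen G v)⁻¹ * raagGen G w ∈ Subgroup.closure (raagS G) := by
  induction p with
  | nil => simpa using one_mem _
  | @cons v u w h p ih =>
    have hc : (raagGen G v)⁻¹ * raagGen G u = raagGen G u * (raagGen G v)⁻¹ :=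
      ((raag_commute G h).inv_left).eq
    have : (raagGen G v)⁻¹ * raagGen G w =
        ((raagGen G v)⁻¹ * raagGen G u) * ((raagGen G u)⁻¹ * raagGen G w) := by group
    rw [this, hc]
    exact mul_mem (Subgroup.subset_closure ⟨u, v, h.symm, rfl⟩) ih

lemma pair_mem {V : Type} (G : SimpleGraph V) (hG : G.Connected) (v w : V) :
    raagGen G v * (raagGen G w)⁻¹ ∈ Subgroup.closure (raagS G) :=
  (hG v w).elim fun p => pair_mem_walk G p

lemma pair_mem' {V : Type} (G : SimpleGraph V) (hG : G.Connected) (v w : V) :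
    (raagGen G v)⁻¹ * raagGen G w ∈ Subgroup.closure (raagS G) :=
  (hG v w).elim fun p => pair_mem_walk' G p

lemma conj_mem_closure {V : Type} (G : SimpleGraph V) (hG : G.Connected) :
    ∀ g : RAAG G, ∀ n ∈ Subgroup.closure (raagS G),
      g * n * g⁻¹ ∈ Subgroup.closure (raagS G) := by
  set N := Subgroup.closure (raagS G) with hN
  let P : Subgroup (RAAG G) :=
    { carrier := {g | ∀ n ∈ N, g * n * g⁻¹ ∈ N ∧ g⁻¹ * n * g ∈ N}
      one_mem' := by intro n hn; constructor <;> · simpa using hn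
      mul_mem' := by
        intro a b ha hb n hn
        constructor
        · have : a * b * n * (a * b)⁻¹ = a * (b * n * b⁻¹) * a⁻¹ := by group
          rw [this]; exact (ha _ (hb n hn).1).1
        · have : (a * b)⁻¹ * n * (a * b) = b⁻¹ * (a⁻¹ * n * a) * b := by group
          rw [this]; exact (hb _ (ha n hn).2).2
      inv_mem' := by
        intro a ha n hn
        simp only [inv_inv]
        exact ⟨(ha n hn).2, (ha n hn).1⟩ }
  have hraag : ∀ u : V, ∀ n ∈ N,
      raagGen G u * n * (raagGen G u)⁻¹ ∈ N ∧ (raagGen G u)⁻¹ * n * raagGen G u ∈ N := by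
    intro u n hn
    induction hn using Subgroup.closure_induction with
    | mem x hx =>
      obtain ⟨v, w, hvw, rfl⟩ := hx
      have hc : raagGen G v * (raagGen G w)⁻¹ = (raagGen G w)⁻¹ * raagGen G v :=
        ((raag_commute G hvw).inv_right).eq
      constructor
      · have key : raagGen G u * (raagGen G v * (raagGen G w)⁻¹) * (raagGen G u)⁻¹ =
            (raagGen G u * (raagGen G w)⁻¹) * (raagGen G v * (raagGen G u)⁻¹) := by
          rw [hc]; group
        rw [key]
        exact mul_mem (pair_mem G hG u w) (pair_mem G hG v u)
      · have key : (raagGen G u)⁻¹ * (raagGen G v * (raagGen G w)⁻¹) * raagGen G u =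
            ((raagGen G u)⁻¹ * raagGen G v) * ((raagGen G w)⁻¹ * raagGen G u) := by
          group
        rw [key]
        exact mul_mem (pair_mem' G hG u v) (pair_mem' G hG w u)
    | one => constructor <;> · simpa using one_mem N
    | mul x y hx hy ihx ihy =>
      constructor
      · have : raagGen G u * (x * y) * (raagGen G u)⁻¹ =
            (raagGen G u * x * (raagGen G u)⁻¹) * (raagGen G u * y * (raagGen G u)⁻¹) := by group
        rw [this]; exact mul_mem ihx.1 ihy.1
      · have : (raagGen G u)⁻¹ * (x * y) * raagGen G u =
            ((raagGen G u)⁻¹ * x * raagGen G u) * ((raagGen G u)⁻¹ * y * raagGen G u) := by group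
        rw [this]; exact mul_mem ihx.2 ihy.2
    | inv x hx ihx =>
      constructor
      · have : raagGen G u * x⁻¹ * (raagGen G u)⁻¹ =
            (raagGen G u * x * (raagGen G u)⁻¹)⁻¹ := by group
        rw [this]; exact inv_mem ihx.1
      · have : (raagGen G u)⁻¹ * x⁻¹ * raagGen G u =
            ((raagGen G u)⁻¹ * x * raagGen G u)⁻¹ := by group
        rw [this]; exact inv_mem ihx.2
  intro g n hn
  exact (PresentedGroup.generated_by _ P (fun j => hraag j) g n hn).1

lemma closure_le_bbg {V : Type} (G : SimpleGraph V) :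
    Subgroup.closure (raagS G) ≤ BBG G := by
  rw [Subgroup.closure_le]
  rintro x ⟨v, w, -, rfl⟩
  show _ ∈ (bbgChar G).ker
  rw [MonoidHom.mem_ker, map_mul, map_inv, bbgChar_gen, bbgChar_gen, mul_inv_cancel]

lemma bbg_le_closure {V : Type} (G : SimpleGraph V) (hG : G.Connected) :
    BBG G ≤ Subgroup.closure (raagS G) := by
  obtain ⟨v0⟩ := hG.nonempty
  set N := Subgroup.closure (raagS G) with hNdef
  set g0 := raagGen G v0 with hg0
  have key : ∀ x : RAAG G, x * g0 ^ (-(Multiplicative.toAdd (bbgChar G x))) ∈ N := by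
    let M : Subgroup (RAAG G) :=
      { carrier := {x | x * g0 ^ (-(Multiplicative.toAdd (bbgChar G x))) ∈ N}
        one_mem' := by simpa using one_mem N
        mul_mem' := by
          intro a b ha hb
          show (a * b) * g0 ^ (-(Multiplicative.toAdd (bbgChar G (a * b)))) ∈ N
          rw [map_mul, toAdd_mul]
          have eq : (a * b) * g0 ^ (-(Multiplicative.toAdd (bbgChar G a) +
                Multiplicative.toAdd (bbgChar G b))) =
              (a * g0 ^ (-(Multiplicative.toAdd (bbgChar G a)))) *
              (g0 ^ (Multiplicative.toAdd (bbgChar G a)) *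
                (b * g0 ^ (-(Multiplicative.toAdd (bbgChar G b)))) *
                (g0 ^ (Multiplicative.toAdd (bbgChar G a)))⁻¹) := by
            group
          rw [eq]
          exact mul_mem ha (conj_mem_closure G hG _ _ hb)
        inv_mem' := by
          intro a ha
          show a⁻¹ * g0 ^ (-(Multiplicative.toAdd (bbgChar G a⁻¹))) ∈ N
          rw [map_inv, toAdd_inv, neg_neg]
          have eq : a⁻¹ * g0 ^ (Multiplicative.toAdd (bbgChar G a)) =
              g0 ^ (-(Multiplicative.toAdd (bbgChar G a))) *
              (a * g0 ^ (-(Multiplicative.toAdd (bbgChar G a))))⁻¹ *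
              (g0 ^ (-(Multiplicative.toAdd (bbgChar G a))))⁻¹ := by group
          rw [eq]
          exact conj_mem_closure G hG _ _ (inv_mem ha) }
    intro x
    refine PresentedGroup.generated_by _ M ?_ x
    intro j
    show raagGen G j * g0 ^ (-(Multiplicative.toAdd (bbgChar G (raagGen G j)))) ∈ N
    rw [bbgChar_gen]
    simpa using pair_mem G hG j v0
  intro x hx
  have hx1 : bbgChar G x = 1 := hx
  have := key x
  rw [hx1] at this
  simpa using this

/-- For a connected graph, the restriction map `Hom(A(Γ),ℝ) → Hom(BB(Γ),ℝ)` is a surjective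
ℝ-linear map whose kernel consists exactly of the characters that are constant on the vertex
generators. -/
theorem stmt_14 {V : Type} [Fintype V] (G : SimpleGraph V) (hG : G.Connected) :
    Function.Surjective (restrictChar G) ∧
    (∀ χ ψ : RAAG G →* Multiplicative ℝ,
      restrictChar G (χ * ψ) = restrictChar G χ * restrictChar G ψ) ∧
    (∀ (c : ℝ) (χ : RAAG G →* Multiplicative ℝ),
      restrictChar G (smulChar c χ) = smulChar c (restrictChar G χ)) ∧
    (∀ χ : RAAG G →* Multiplicative ℝ,
      restrictChar G χ = 1 ↔ ∃ c : ℝ, ∀ v : V, χ (raagGen G v) = Multiplicative.ofAdd c) := by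
  obtain ⟨v0⟩ := hG.nonempty
  have hmem : ∀ v : V, raagGen G v * (raagGen G v0)⁻¹ ∈ BBG G := fun v => by
    show _ ∈ (bbgChar G).ker
    rw [MonoidHom.mem_ker, map_mul, map_inv, bbgChar_gen, bbgChar_gen, mul_inv_cancel]
  refine ⟨?_, ?_, ?_, ?_⟩
  · -- surjectivity
    intro φ
    set c : V → ℝ := fun v => Multiplicative.toAdd (φ ⟨_, hmem v⟩) with hc
    have hrel : ∀ r ∈ raagRels G,
        FreeGroup.lift (fun v => Multiplicative.ofAdd (c v)) r = 1 := by
      rintro r ⟨v, w, -, rfl⟩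
      have habel : ∀ a b : Multiplicative ℝ, a * b * a⁻¹ * b⁻¹ = 1 := fun a b => by
        rw [mul_comm a b]; group
      simp only [map_mul, map_inv, FreeGroup.lift_apply_of]
      exact habel _ _
    set χ : RAAG G →* Multiplicative ℝ := PresentedGroup.toGroup hrel with hχ
    have χgen : ∀ v : V, χ (raagGen G v) = φ ⟨_, hmem v⟩ := by
      intro v
      show χ (PresentedGroup.of v) = _
      rw [hχ, PresentedGroup.toGroup.of]
      exact ofAdd_toAdd _
    refine ⟨χ, ?_⟩
    have main : ∀ y, y ∈ Subgroup.closure (raagS G) → ∀ hyB : y ∈ BBG G,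
        χ y = φ ⟨y, hyB⟩ := by
      intro y hy
      induction hy using Subgroup.closure_induction with
      | mem x hx =>
        obtain ⟨v, w, hvw, rfl⟩ := hx
        intro hyB
        have e1 : (⟨raagGen G v * (raagGen G w)⁻¹, hyB⟩ : ↥(BBG G)) =
            ⟨_, hmem v⟩ * (⟨_, hmem w⟩)⁻¹ := by
          apply Subtype.ext
          show raagGen G v * (raagGen G w)⁻¹ =
            (raagGen G v * (raagGen G v0)⁻¹) * (raagGen G w * (raagGen G v0)⁻¹)⁻¹
          group
        rw [e1, map_mul, map_inv, map_mul, map_inv, χgen v, χgen w]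
      | one =>
        intro hyB
        have : (⟨(1 : RAAG G), hyB⟩ : ↥(BBG G)) = 1 := rfl
        rw [map_one, this, map_one]
      | mul x y hx hy ihx ihy =>
        intro hyB
        rw [map_mul, ihx (closure_le_bbg G hx), ihy (closure_le_bbg G hy), ← map_mul]
        rfl
      | inv x hx ihx =>
        intro hyB
        rw [map_inv, ihx (closure_le_bbg G hx), ← map_inv]
        rfl
    ext x
    obtain ⟨x, hx⟩ := x
    exact main x (bbg_le_closure G hG hx) hx
  · intro χ ψ; rfl
  · intro cr χ; rfl
  · intro χ
    constructor
    · intro hr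
      refine ⟨Multiplicative.toAdd (χ (raagGen G v0)), fun v => ?_⟩
      have h1 : χ (raagGen G v * (raagGen G v0)⁻¹) = 1 := by
        exact DFunLike.congr_fun hr (⟨_, hmem v⟩ : ↥(BBG G))
      rw [map_mul, map_inv, mul_inv_eq_one] at h1
      rw [ofAdd_toAdd]
      exact h1
    · rintro ⟨cr, hcr⟩
      have hχ : χ = (AddMonoidHom.toMultiplicative (zmultiplesHom ℝ cr)).comp (bbgChar G) := by
        apply PresentedGroup.ext
        intro v
        have : χ (raagGen G v) = Multiplicative.ofAdd cr := hcr v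
        rw [show (PresentedGroup.of v : RAAG G) = raagGen G v from rfl, this]
        show _ = (AddMonoidHom.toMultiplicative (zmultiplesHom ℝ cr)) (bbgChar G (raagGen G v))
        rw [bbgChar_gen]
        simp [zmultiplesHom]
      ext x
      obtain ⟨x, hx⟩ := x
      show χ x = 1
      have hx1 : bbgChar G x = 1 := hx
      rw [hχ]
      show (AddMonoidHom.toMultiplicative (zmultiplesHom ℝ cr)) (bbgChar G x) = 1
      rw [hx1, map_one]
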